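/- Let L be a μ-way latin square of order n with exactly k fixed cells, and let p be the number of symbols that appear only in fixed cells of L. Then p ≥ ⌈n − (n² − k)/μ⌉. -/

import Mathlib

/-- A μ-way latin square of order n: μ latin squares on symbols `Fin n` such that
in every cell the μ entries are all equal or pairwise distinct. -/
def IsMuWayLatinSquare {μ n : ℕ} (L : Fin μ → Fin n → Fin n → Fin n) : Prop :=
  (∀ m i, Function.Injective (L m i)) ∧
  (∀ m j, Function.Injective (fun i => L m i j)) ∧
  (∀ i j, (∀ a b, L a i j = L b i j) ∨ Function.Injective (fun a => L a i j))

/-- A cell is fixed when the μ entries there coincide. -/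
def IsFixedCell {μ n : ℕ} (L : Fin μ → Fin n → Fin n → Fin n) (i j : Fin n) : Prop :=
  ∀ a b, L a i j = L b i j

instance {μ n : ℕ} (L : Fin μ → Fin n → Fin n → Fin n) (i j : Fin n) :
    Decidable (IsFixedCell L i j) :=
  inferInstanceAs (Decidable (∀ a b, L a i j = L b i j))

/-- The number of fixed cells. -/
def numFixed {μ n : ℕ} (L : Fin μ → Fin n → Fin n → Fin n) : ℕ :=
  (Finset.univ.filter fun p : Fin n × Fin n => IsFixedCell L p.1 p.2).card

/-- The number of fixed cells in row `i`. -/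
def rowFixed {μ n : ℕ} (L : Fin μ → Fin n → Fin n → Fin n) (i : Fin n) : ℕ :=
  (Finset.univ.filter fun j : Fin n => IsFixedCell L i j).card

/-- The intersection spectrum `I^μ[n]`. -/
def Spectrum (μ n : ℕ) : Set ℕ :=
  {k | ∃ L : Fin μ → Fin n → Fin n → Fin n, IsMuWayLatinSquare L ∧ numFixed L = k}

theorem stmt_4 {μ n k : ℕ} (L : Fin μ → Fin n → Fin n → Fin n)
    (hL : IsMuWayLatinSquare L) (hk : numFixed L = k)
    (p : ℕ)
    (hp : p = (Finset.univ.filter fun x : Fin n =>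
      ∀ (a : Fin μ) (i j : Fin n), L a i j = x → IsFixedCell L i j).card) :
    ⌈(n : ℚ) - ((n ^ 2 - k : ℕ) : ℚ) / (μ : ℚ)⌉ ≤ (p : ℤ) := by
  rw [Int.ceil_le]
  push_cast
  rcases Nat.eq_zero_or_pos μ with hμ | hμ
  · -- μ = 0 : every symbol satisfies the vacuous condition, so p = n
    have hpn : p = n := by
      subst hμ
      rw [hp, Finset.filter_true_of_mem, Finset.card_univ, Fintype.card_fin]
      intro x _ a
      exact absurd a.2 (by omega)
    rw [hpn]
    have : (0:ℚ) ≤ ((n ^ 2 - k : ℕ) : ℚ) / (μ : ℚ) :=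
      div_nonneg (by positivity) (by positivity)
    linarith
  · set P : Finset (Fin n) := (Finset.univ.filter fun x : Fin n =>
      ∀ (a : Fin μ) (i j : Fin n), L a i j = x → IsFixedCell L i j) with hP
    have hpn : p ≤ n := by
      rw [hp]
      exact (Finset.card_filter_le _ _).trans (by simp)
    obtain ⟨hrow, hcol, hcell⟩ := hL
    set a0 : Fin μ := ⟨0, hμ⟩
    set N : Finset (Fin n × Fin n) :=
      Finset.univ.filter (fun c : Fin n × Fin n => ¬ IsFixedCell L c.1 c.2) with hN
    have hNcard : N.card = n ^ 2 - k := by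
      have hNeq : N = Finset.univ \ (Finset.univ.filter
          fun c : Fin n × Fin n => IsFixedCell L c.1 c.2) := Finset.filter_not _ _
      rw [numFixed] at hk
      rw [hNeq, Finset.card_sdiff_of_subset (Finset.filter_subset _ _), Finset.card_univ, hk]
      simp [Fintype.card_prod, sq]
    -- key bound : for x not in P, T x has at least μ elements
    set T : Fin n → Finset (Fin n × Fin n) :=
      fun x => N.filter (fun c => L a0 c.1 c.2 = x) with hT
    have key : ∀ x : Fin n, x ∉ P → μ ≤ (T x).card := by
      intro x hx
      simp only [hP, Finset.mem_filter, Finset.mem_univ, true_and] at hx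
      push_neg at hx
      obtain ⟨a, i, j, hax, hnf⟩ := hx
      -- for each square b, the column jb b where x sits in row i of square b
      have hsurj : ∀ b : Fin μ, ∃ c : Fin n, L b i c = x := fun b =>
        (Finite.injective_iff_surjective.mp (hrow b i)) x
      choose jb hjb using hsurj
      -- the cell (i, jb b) is not fixed
      have hnfb : ∀ b, ¬ IsFixedCell L i (jb b) := by
        intro b hfix
        have h1 : L a i (jb b) = x := (hfix a b).trans (hjb b)
        have : jb b = j := hrow a i (h1.trans hax.symm)
        exact hnf (this ▸ hfix)
      -- jb is injective
      have hjbinj : Function.Injective jb := by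
        intro b b' hbb'
        rcases hcell i (jb b) with hfix | hinj
        · exact absurd hfix (hnfb b)
        · exact hinj (show L b i (jb b) = L b' i (jb b) by
            rw [hjb b, hbb', hjb b'])
      -- the row rb b where x sits in column jb b of square a0
      have hsurj2 : ∀ b : Fin μ, ∃ r : Fin n, L a0 r (jb b) = x := fun b =>
        (Finite.injective_iff_surjective.mp (hcol a0 (jb b))) x
      choose rb hrb using hsurj2
      -- the cell (rb b, jb b) is not fixed
      have hnfr : ∀ b, ¬ IsFixedCell L (rb b) (jb b) := by
        intro b hfix
        have h1 : L b (rb b) (jb b) = x := (hfix b a0).trans (hrb b)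
        have : rb b = i := hcol b (jb b) (h1.trans (hjb b).symm)
        exact hnfb b (this ▸ hfix)
      -- the injection
      have : (Finset.univ : Finset (Fin μ)).card ≤ (T x).card := by
        apply Finset.card_le_card_of_injOn (fun b : Fin μ => (rb b, jb b))
        · intro b _
          simp only [Finset.mem_coe, hT, Finset.mem_filter, hN]
          exact ⟨⟨Finset.mem_univ _, hnfr b⟩, hrb b⟩
        · intro b _ b' _ h
          exact hjbinj (congrArg Prod.snd h)
      simpa using this
    -- summing up
    have hsum : N.card = ∑ x : Fin n, (T x).card := by
      apply Finset.card_eq_sum_card_fiberwise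
      intro c _
      exact Finset.mem_univ _
    have hmain : (n - p) * μ ≤ n ^ 2 - k := by
      calc (n - p) * μ = ∑ _x ∈ Finset.univ \ P, μ := by
            rw [Finset.sum_const, smul_eq_mul, Finset.card_sdiff_of_subset (Finset.subset_univ P),
              Finset.card_univ, Fintype.card_fin, hp]
        _ ≤ ∑ x ∈ Finset.univ \ P, (T x).card := by
            apply Finset.sum_le_sum
            intro x hx
            exact key x (Finset.mem_sdiff.mp hx).2
        _ ≤ ∑ x : Fin n, (T x).card := by
            apply Finset.sum_le_sum_of_subset (Finset.sdiff_subset)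
        _ = n ^ 2 - k := by rw [← hsum, hNcard]
    -- conclude over ℚ
    have hμQ : (0:ℚ) < (μ:ℚ) := by exact_mod_cast hμ
    have hQ : ((n:ℚ) - p) * μ ≤ ((n ^ 2 - k : ℕ) : ℚ) := by
      calc ((n:ℚ) - p) * μ = (((n - p : ℕ) : ℚ)) * μ := by
            rw [Nat.cast_sub hpn]
        _ ≤ ((n ^ 2 - k : ℕ) : ℚ) := by exact_mod_cast hmain
    rw [sub_le_iff_le_add, ← sub_le_iff_le_add', le_div_iff₀ hμQ]
    exact hQ
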